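/- Let b > 0 and let B ∈ ℝ^{n×n} be symmetric positive definite with B ⪯ bI. Then for every x ∈ ℝⁿ, θ_B(x) ≤ −(1/(2b)) ‖d_SD(x)‖²; equivalently, d_B(x)ᵀ B d_B(x) ≥ ‖d_SD(x)‖² / b. -/

import Mathlib

open RealInnerProductSpace

noncomputable section

abbrev E (n : ℕ) := EuclideanSpace ℝ (Fin n)

def maxD {n m : ℕ} [NeZero m] (f : Fin m → E n → ℝ) (x d : E n) : ℝ :=
  Finset.univ.sup' Finset.univ_nonempty (fun i => ⟪gradient (f i) x, d⟫)

def quad {n : ℕ} (B : Matrix (Fin n) (Fin n) ℝ) (d : E n) : ℝ :=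
  ∑ i, ∑ j, d i * B i j * d j

lemma maxD_smul {n m : ℕ} [NeZero m] (f : Fin m → E n → ℝ) (x : E n)
    {t : ℝ} (ht : 0 ≤ t) (d : E n) : maxD f x (t • d) = t * maxD f x d := by
  unfold maxD
  rw [show (fun i => ⟪gradient (f i) x, t • d⟫) = fun i => t * ⟪gradient (f i) x, d⟫ from
    funext fun i => real_inner_smul_right _ _ _]
  exact (Finset.comp_sup'_eq_sup'_comp _ (fun r => t * r)
    (fun a c => mul_max_of_nonneg a c ht)).symm

lemma quad_smul {n : ℕ} (B : Matrix (Fin n) (Fin n) ℝ) (t : ℝ) (d : E n) :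
    quad B (t • d) = t ^ 2 * quad B d := by
  simp only [quad, Finset.mul_sum, PiLp.smul_apply, smul_eq_mul]
  exact Finset.sum_congr rfl fun i _ => Finset.sum_congr rfl fun j _ => by ring

lemma quad_eq_dot {n : ℕ} (B : Matrix (Fin n) (Fin n) ℝ) (d : E n) :
    quad B d = dotProduct (fun i => d i) (B.mulVec fun i => d i) := by
  simp only [quad, dotProduct, Matrix.mulVec, Finset.mul_sum]
  exact Finset.sum_congr rfl fun i _ => Finset.sum_congr rfl fun j _ => by ring

lemma norm_sq_eq_dot {n : ℕ} (d : E n) :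
    ‖d‖ ^ 2 = dotProduct (fun i => d i) (fun i => d i) := by
  rw [← real_inner_self_eq_norm_sq]
  rw [PiLp.inner_apply]
  exact Finset.sum_congr rfl fun i _ => by simp [mul_comm, sq]

lemma key (M Q : ℝ) (hQ : 0 ≤ Q)
    (h : ∀ t : ℝ, 0 ≤ t → M + Q / 2 ≤ t * M + t ^ 2 * Q / 2) : M = -Q := by
  rcases eq_or_lt_of_le hQ with h0 | h0
  · have h2 := h 2 (by norm_num)
    have hz := h 0 le_rfl
    rw [← h0] at h2 hz ⊢
    linarith
  · have hz := h 0 le_rfl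
    set e := (M + Q) / (2 * Q) with he
    have hQ' : (2 : ℝ) * Q ≠ 0 := by positivity
    have heQ : M + Q = 2 * Q * e := by rw [he]; field_simp
    have ht0 : (0:ℝ) ≤ 1 - e := by
      rw [sub_nonneg, he, div_le_one (by linarith)]
      linarith
    have h1 := h (1 - e) ht0
    have hprod : e * M + e * Q = 2 * Q * e ^ 2 := by
      have : e * (M + Q) = e * (2 * Q * e) := by rw [← heQ]
      nlinarith [this]
    have hle : e ^ 2 * Q ≤ 0 := by nlinarith [h1, hprod]
    have he2 : e ^ 2 = 0 := le_antisymm (by nlinarith) (sq_nonneg e)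
    have he0 : e = 0 := by
      exact pow_eq_zero_iff two_ne_zero |>.mp he2
    rw [he0, mul_zero] at heQ
    linarith

/-- θ_B(x) ≤ −‖d_SD(x)‖²/(2b) and d_B(x)ᵀ B d_B(x) ≥ ‖d_SD(x)‖²/b. -/
theorem stmt15 {n m : ℕ} [NeZero m] (f : Fin m → E n → ℝ)
    (hf : ∀ i, ContDiff ℝ 1 (f i))
    (b : ℝ) (hb : 0 < b)
    (B : Matrix (Fin n) (Fin n) ℝ) (hB : B.PosDef)
    (hBup : ((b • (1 : Matrix (Fin n) (Fin n) ℝ)) - B).PosSemidef)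
    (x dsd dB : E n) (θB : ℝ)
    (hdsd : ∀ d : E n, maxD f x dsd + ‖dsd‖ ^ 2 / 2 ≤ maxD f x d + ‖d‖ ^ 2 / 2)
    (hdB : ∀ d : E n, maxD f x dB + quad B dB / 2 ≤ maxD f x d + quad B d / 2)
    (hθ : θB = maxD f x dB + quad B dB / 2) :
    θB ≤ -(1 / (2 * b)) * ‖dsd‖ ^ 2 ∧ ‖dsd‖ ^ 2 / b ≤ quad B dB := by
  have hs2nn : (0:ℝ) ≤ ‖dsd‖ ^ 2 := sq_nonneg _
  have hQnn : 0 ≤ quad B dB := by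
    rw [quad_eq_dot]
    have := hB.posSemidef.dotProduct_mulVec_nonneg (fun i => dB i)
    simpa [star_trivial] using this
  -- maxD f x dsd = -‖dsd‖²
  have hMval : maxD f x dsd = -‖dsd‖ ^ 2 := by
    apply key _ _ hs2nn
    intro t ht
    have h := hdsd (t • dsd)
    rw [maxD_smul f x ht, norm_smul, mul_pow, Real.norm_eq_abs, sq_abs] at h
    linarith
  -- maxD f x dB = -quad B dB
  have hMBval : maxD f x dB = -quad B dB := by
    apply key _ _ hQnn
    intro t ht
    have h := hdB (t • dB)
    rw [maxD_smul f x ht, quad_smul] at h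
    linarith
  -- quad B d ≤ b * ‖d‖²
  have hquad_le : ∀ d : E n, quad B d ≤ b * ‖d‖ ^ 2 := by
    intro d
    have h := hBup.dotProduct_mulVec_nonneg (fun i => d i)
    simp only [Matrix.sub_mulVec, Matrix.smul_mulVec, Matrix.one_mulVec,
      dotProduct_sub, dotProduct_smul, smul_eq_mul, star_trivial,
      sub_nonneg] at h
    rw [quad_eq_dot, norm_sq_eq_dot]
    exact h
  -- first inequality
  have h1 : θB ≤ -(1 / (2 * b)) * ‖dsd‖ ^ 2 := by
    have hd := hdB ((1 / b) • dsd)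
    rw [maxD_smul f x (by positivity) dsd] at hd
    have hq := hquad_le ((1 / b) • dsd)
    rw [norm_smul, mul_pow, Real.norm_eq_abs, sq_abs] at hq
    have hb' : b ≠ 0 := ne_of_gt hb
    have e1 : b * ((1/b)^2 * ‖dsd‖^2) = ‖dsd‖^2 / b := by field_simp
    have e2 : 1 / b * (-‖dsd‖^2) + (‖dsd‖^2 / b) / 2 = -(1 / (2 * b)) * ‖dsd‖ ^ 2 := by
      field_simp; ring
    rw [hθ]
    calc maxD f x dB + quad B dB / 2
        ≤ 1 / b * maxD f x dsd + quad B ((1/b) • dsd) / 2 := hd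
      _ ≤ 1 / b * (-‖dsd‖^2) + (‖dsd‖^2 / b) / 2 := by
          rw [hMval]
          have : quad B ((1/b) • dsd) ≤ ‖dsd‖^2 / b := by rw [← e1]; exact hq
          linarith
      _ = -(1 / (2 * b)) * ‖dsd‖ ^ 2 := e2
  refine ⟨h1, ?_⟩
  have hθval : θB = -quad B dB / 2 := by rw [hθ, hMBval]; ring
  rw [hθval] at h1
  have e1 : -(1 / (2 * b)) * ‖dsd‖ ^ 2 * (2 * b) = -‖dsd‖^2 := by field_simp
  have h3 : -quad B dB / 2 * (2 * b) ≤ -(1 / (2 * b)) * ‖dsd‖ ^ 2 * (2 * b) :=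
    mul_le_mul_of_nonneg_right h1 (by positivity)
  rw [e1] at h3
  rw [div_le_iff₀ hb]
  nlinarith [h3]
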